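/- Fix α > 1, let δ = ⌈2·(α + 1)²/(2α + 1)⌉, and for an integer m with m ≥ 3·⌈α + 1⌉ define m''' = ⌊m/(α + 1)⌋ + 1, m* = m − m''', m'' = ⌊m*/(α + 1)⌋ + 1, and m' = m* − m''. Then for every integer n with n − δ ≥ 3·⌈α + 1⌉: (a) n/(α + 1) − δ ≤ (n − δ)'''; (b) α·n/(α + 1)² − δ ≤ (n − δ)''; (c) α²·n/(α + 1)² − δ ≤ (n − δ)'. -/
import Mathlib


/-- `m''' = ⌊m/(α+1)⌋ + 1`, the least integer greater than `m/(α+1)`. -/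
noncomputable def nPPP (α : ℝ) (m : ℕ) : ℕ := ⌊(m : ℝ) / (α + 1)⌋₊ + 1

/-- `m* = m − m'''`. -/
noncomputable def nStar (α : ℝ) (m : ℕ) : ℕ := m - nPPP α m

/-- `m'' = ⌊m*/(α+1)⌋ + 1`. -/
noncomputable def nPP (α : ℝ) (m : ℕ) : ℕ := ⌊(nStar α m : ℝ) / (α + 1)⌋₊ + 1

/-- `m' = m* − m''`. -/
noncomputable def nP (α : ℝ) (m : ℕ) : ℕ := nStar α m - nPP α m

/-- `δ = ⌈2(α+1)²/(2α+1)⌉`. -/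
noncomputable def delta (α : ℝ) : ℕ := ⌈2 * (α + 1) ^ 2 / (2 * α + 1)⌉₊

set_option maxHeartbeats 1000000 in
/-- Claim 15(a,b,c): bounds on `(n−δ)'''`, `(n−δ)''`, `(n−δ)'`. -/
theorem nprimes_delta_bounds (α : ℝ) (hα : 1 < α) (n : ℕ)
    (hn : 3 * ⌈α + 1⌉₊ ≤ n - delta α) :
    ((n : ℝ) / (α + 1) - delta α ≤ (nPPP α (n - delta α) : ℝ)) ∧
    (α * (n : ℝ) / (α + 1) ^ 2 - delta α ≤ (nPP α (n - delta α) : ℝ)) ∧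
    (α ^ 2 * (n : ℝ) / (α + 1) ^ 2 - delta α ≤ (nP α (n - delta α) : ℝ)) := by
  have hA : (0:ℝ) < α + 1 := by linarith
  have hA1 : (1:ℝ) < α + 1 := by linarith
  set m := n - delta α with hm
  -- m ≥ 6
  have hceil2 : 2 ≤ ⌈α + 1⌉₊ := by
    have h1 : 1 < ⌈α + 1⌉₊ := Nat.lt_ceil.mpr (by push_cast; linarith)
    omega
  have hm6 : 6 ≤ m := le_trans (by omega) hn
  have hδn : delta α ≤ n := by omega
  have hncast : (n:ℝ) = (m:ℝ) + (delta α : ℝ) := by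
    rw [hm, Nat.cast_sub hδn]; ring
  have hδ0 : (0:ℝ) ≤ (delta α : ℝ) := Nat.cast_nonneg _
  have hδ2 : 2*(α+1)^2 ≤ (delta α : ℝ) * (2*α+1) := by
    have hδ : 2*(α+1)^2/(2*α+1) ≤ (delta α : ℝ) := Nat.le_ceil _
    rw [div_le_iff₀ (by linarith)] at hδ
    linarith
  have hδα1 : α + 1 ≤ (delta α : ℝ) := by nlinarith [hδ2]
  have hmR : (0:ℝ) < (m:ℝ) := by exact_mod_cast Nat.lt_of_lt_of_le (by norm_num) hm6
  have hmR6 : (6:ℝ) ≤ (m:ℝ) := by exact_mod_cast hm6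
  -- p = m''' facts
  set p := nPPP α m with hp
  have hp_lt : (m:ℝ) < (p:ℝ) * (α+1) := by
    have h1 : (m:ℝ)/(α+1) < (p:ℝ) := by
      rw [hp, nPPP]; push_cast; exact Nat.lt_floor_add_one _
    rw [div_lt_iff₀ hA] at h1; linarith
  have hp_le : (p:ℝ) * (α+1) ≤ (m:ℝ) + (α+1) := by
    have h1 : (p:ℝ) ≤ (m:ℝ)/(α+1) + 1 := by
      rw [hp, nPPP]; push_cast
      have := Nat.floor_le (div_nonneg (Nat.cast_nonneg m) hA.le)
      linarith
    have h2 : ((m:ℝ)/(α+1) + 1) * (α+1) = (m:ℝ) + (α+1) := by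
      field_simp
    nlinarith [h1]
  have hpm : p ≤ m := by
    have hfl : ⌊(m:ℝ)/(α+1)⌋₊ < m := by
      rw [Nat.floor_lt (div_nonneg (Nat.cast_nonneg m) hA.le)]
      exact div_lt_self hmR hA1
    rw [hp, nPPP]; omega
  -- s = m* facts
  set s := nStar α m with hs
  have hscast : (s:ℝ) = (m:ℝ) - (p:ℝ) := by
    rw [hs, nStar, Nat.cast_sub hpm]
  have hs_lb : α * (m:ℝ) - (α+1) ≤ (s:ℝ) * (α+1) := by
    nlinarith [hscast, hp_le]
  have hsR : (0:ℝ) < (s:ℝ) := by nlinarith [hs_lb]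
  -- q = m'' facts
  set q := nPP α m with hq
  have hq_lt : (s:ℝ) < (q:ℝ) * (α+1) := by
    have h1 : (s:ℝ)/(α+1) < (q:ℝ) := by
      rw [hq, nPP]; push_cast; exact Nat.lt_floor_add_one _
    rw [div_lt_iff₀ hA] at h1; linarith
  have hq_le : (q:ℝ) * (α+1) ≤ (s:ℝ) + (α+1) := by
    have h1 : (q:ℝ) ≤ (s:ℝ)/(α+1) + 1 := by
      rw [hq, nPP]; push_cast
      have := Nat.floor_le (div_nonneg (Nat.cast_nonneg s) hA.le)
      linarith
    have h2 : ((s:ℝ)/(α+1) + 1) * (α+1) = (s:ℝ) + (α+1) := by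
      field_simp
    nlinarith [h1]
  have hqs : q ≤ s := by
    have hfl : ⌊(s:ℝ)/(α+1)⌋₊ < s := by
      rw [Nat.floor_lt (div_nonneg (Nat.cast_nonneg s) hA.le)]
      exact div_lt_self hsR hA1
    rw [hq, nPP, ← hs]; omega
  -- r = m' facts
  set r := nP α m with hr
  have hrcast : (r:ℝ) = (s:ℝ) - (q:ℝ) := by
    rw [hr, nP, Nat.cast_sub hqs]
  have hA2 : (0:ℝ) < (α+1)^2 := by positivity
  refine ⟨?_, ?_, ?_⟩
  · rw [sub_le_iff_le_add, div_le_iff₀ hA]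
    nlinarith [hp_lt, hncast, mul_nonneg hδ0 (le_of_lt hA)]
  · rw [sub_le_iff_le_add, div_le_iff₀ hA2]
    have hq2 : (s:ℝ)*(α+1) < (q:ℝ)*(α+1)^2 := by nlinarith [hq_lt]
    nlinarith [hq2, hs_lb, hδ2]
  · rw [sub_le_iff_le_add, div_le_iff₀ hA2]
    have hq3 : (q:ℝ)*(α+1)^2 ≤ ((s:ℝ) + (α+1))*(α+1) := by nlinarith [hq_le]
    have hs2 : α*(α * (m:ℝ) - (α+1)) ≤ α*((s:ℝ) * (α+1)) :=
      mul_le_mul_of_nonneg_left hs_lb (by linarith)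
    nlinarith [hq3, hs2, hδα1, hrcast]
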